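/- The discriminant of the trinomial x^n + a x + b equals (-1)^{n(n-1)/2} (n^n b^{n-1} + (1-n)^{n-1} a^n). -/

import Mathlib

open Polynomial Finset

private lemma swap_prod' {ι : Type*} (s : Finset ι) (R : Multiset ℂ) (g : ι → ℂ → ℂ) :
    ∏ i ∈ s, (R.map (g i)).prod = (R.map (fun r => ∏ i ∈ s, g i r)).prod := by
  induction R using Multiset.induction with
  | empty => simp
  | cons r R ih => simp [Finset.prod_mul_distrib, ih]

private lemma eval_deriv_prod' (n : ℕ) (θ : Fin n → ℂ) (i : Fin n) :
    eval (θ i) (derivative (∏ j, (X - C (θ j)))) = ∏ j ∈ univ.erase i, (θ i - θ j) := by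
  have h1 : (∏ j, (X - C (θ j))) = ((univ.val.map θ).map (fun z => X - C z)).prod := by
    rw [Multiset.map_map]; rfl
  have hmem : θ i ∈ univ.val.map θ := Multiset.mem_map_of_mem θ (mem_univ i)
  rw [h1, eval_multiset_prod_X_sub_C_derivative hmem]
  have h2 : (univ.val.map θ).erase (θ i) = (univ.val.erase i).map θ := by
    have : (univ.val : Multiset (Fin n)) = i ::ₘ univ.val.erase i :=
      (Multiset.cons_erase (mem_univ_val i)).symm
    conv_lhs => rw [this, Multiset.map_cons, Multiset.erase_cons_head]
  rw [h2, Multiset.map_map]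
  rfl

private lemma sign_prod' (n : ℕ) (θ : Fin n → ℂ) :
    ∏ q ∈ Finset.univ.filter (fun q : Fin n × Fin n => q.1 < q.2), (θ q.1 - θ q.2) ^ 2 =
      (-1 : ℂ) ^ (n * (n - 1) / 2) * ∏ i, ∏ j ∈ univ.erase i, (θ i - θ j) := by
  classical
  set L := Finset.univ.filter (fun q : Fin n × Fin n => q.1 < q.2) with hL
  set G := Finset.univ.filter (fun q : Fin n × Fin n => q.2 < q.1) with hG
  set E := Finset.univ.filter (fun q : Fin n × Fin n => q.1 ≠ q.2) with hE
  have hunion : E = L ∪ G := by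
    ext q; simp only [hE, hL, hG, mem_union, mem_filter, mem_univ, true_and]
    constructor
    · exact fun h => h.lt_or_gt
    · rintro (h | h); exacts [h.ne, h.ne']
  have hdisj : Disjoint L G := by
    simp only [Finset.disjoint_left, hL, hG, mem_filter, mem_univ, true_and]
    intro q h1 h2; exact absurd h2 (asymm h1)
  have hGL : ∀ (g : Fin n × Fin n → ℂ), ∏ q ∈ G, g q = ∏ q ∈ L, g q.swap := by
    intro g
    apply Finset.prod_nbij' Prod.swap Prod.swap <;>
      simp [hL, hG, mem_filter]
  have hcardGL : G.card = L.card := by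
    rw [← Finset.card_image_of_injective L Prod.swap_injective]
    congr 1
    ext q
    simp only [hL, hG, Finset.mem_image, mem_filter, mem_univ, true_and]
    constructor
    · exact fun h => ⟨q.swap, h, q.swap_swap⟩
    · rintro ⟨p, hp, rfl⟩; exact hp
  have hEcard : E.card = n * n - n := by
    have : E = (univ : Finset (Fin n)).offDiag := by
      rw [← Finset.univ_product_univ] at *
      ext q; simp [hE, Finset.mem_offDiag]
    rw [this, Finset.offDiag_card]
    simp
  have hLcard : L.card = n * (n - 1) / 2 := by
    have h2 : L.card + G.card = E.card :=
      (Finset.card_union_of_disjoint hdisj).symm.trans (by rw [hunion])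
    have h3 : n * n - n = n * (n - 1) := by
      cases n <;> simp [Nat.mul_sub_one] <;> ring_nf <;> omega
    omega
  have hprodE : ∏ q ∈ E, (θ q.1 - θ q.2) = ∏ i, ∏ j ∈ univ.erase i, (θ i - θ j) := by
    rw [hE, ← Finset.univ_product_univ, Finset.prod_filter, Finset.prod_product]
    refine Finset.prod_congr rfl fun i _ => ?_
    rw [← Finset.prod_filter]
    congr 1
    ext j; simp [eq_comm, Ne]
  have key : ∏ q ∈ E, (θ q.1 - θ q.2) = (-1 : ℂ) ^ L.card * ∏ q ∈ L, (θ q.1 - θ q.2) ^ 2 := by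
    rw [hunion, Finset.prod_union hdisj, hGL, ← Finset.prod_mul_distrib, ← Finset.prod_const,
      ← Finset.prod_mul_distrib]
    refine Finset.prod_congr rfl fun q _ => ?_
    simp [Prod.swap]; ring
  have hsq : ((-1 : ℂ) ^ L.card) * ((-1 : ℂ) ^ L.card) = 1 := by
    rw [← pow_add, ← two_mul, pow_mul]; norm_num
  rw [← hprodE, key, ← mul_assoc, hLcard] at *
  rw [← hLcard, hsq, one_mul]

private lemma prod_deriv' (m : ℕ) (hm : 1 ≤ m) (a b : ℤ) (θ : Fin (m+1) → ℂ)
    (h : (X ^ (m+1) + C (a : ℂ) * X + C (b : ℂ) : ℂ[X]) = ∏ i, (X - C (θ i))) :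
    ∏ i, eval (θ i) (derivative (X ^ (m+1) + C (a : ℂ) * X + C (b : ℂ) : ℂ[X])) =
      ((m:ℂ)+1) ^ (m+1) * (b : ℂ) ^ m + ((1 : ℂ) - ((m:ℂ)+1)) ^ m * (a : ℂ) ^ (m+1) := by
  classical
  set N : ℂ := (m : ℂ) + 1 with hN
  have hNz : N ≠ 0 := by
    have h0 : ((m+1 : ℕ) : ℂ) ≠ 0 := Nat.cast_ne_zero.mpr (by omega)
    push_cast at h0; exact h0
  set g : ℂ[X] := X ^ m + C ((a : ℂ) / N) with hg
  have hgm : g.Monic := monic_X_pow_add_C _ (by omega)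
  have hgsplits : Multiset.card g.roots = m := by
    have := (Polynomial.splits_iff_card_roots (f := g)).mp (IsAlgClosed.splits g)
    rwa [natDegree_X_pow_add_C] at this
  have hgfact : (g.roots.map fun r => X - C r).prod = g :=
    prod_multiset_X_sub_C_of_monic_of_roots_card_eq hgm (by rw [hgsplits, natDegree_X_pow_add_C])
  have hroot : ∀ r ∈ g.roots, r ^ m = -((a:ℂ) / N) := by
    intro r hr
    have h1 := (mem_roots hgm.ne_zero).mp hr
    simp only [hg, IsRoot, eval_add, eval_pow, eval_X, eval_C] at h1
    linear_combination h1
  have hevalg : ∀ v : ℂ, (g.roots.map fun r => v - r).prod = v ^ m + (a:ℂ)/N := by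
    intro v
    have : eval v g = v ^ m + (a:ℂ)/N := by simp [hg]
    rw [← this, ← hgfact, eval_multiset_prod, Multiset.map_map]
    simp [Function.comp]
  have hder : derivative (X ^ (m+1) + C (a : ℂ) * X + C (b : ℂ) : ℂ[X]) = C N * g := by
    rw [hg]
    simp [derivative_X_pow, mul_add, ← C_mul, mul_div_cancel₀ _ hNz]
    rw [show ((m:ℂ[X]) + 1) = C ((m:ℂ) + 1) by simp]
  have heval : ∀ i, eval (θ i) (derivative (X ^ (m+1) + C (a : ℂ) * X + C (b : ℂ) : ℂ[X]))
      = N * ((g.roots.map fun r => θ i - r).prod) := by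
    intro i
    rw [hder, eval_mul, eval_C, ← hgfact, eval_multiset_prod, Multiset.map_map]
    simp [Function.comp]
  rw [Finset.prod_congr rfl fun i _ => heval i, Finset.prod_mul_distrib, Finset.prod_const,
    card_univ, Fintype.card_fin, swap_prod']
  set c : ℂ := (a : ℂ) * (N - 1) / N with hc
  have hinner : ∀ r ∈ g.roots, ∏ i, (θ i - r) = (-1 : ℂ)^(m+1) * (c * r + b) := by
    intro r hr
    have h1 : ∏ i, (θ i - r)
        = (-1 : ℂ)^(m+1) * eval r (X ^ (m+1) + C (a : ℂ) * X + C (b : ℂ) : ℂ[X]) := by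
      calc ∏ i, (θ i - r) = ∏ i, (-1 * (r - θ i)) :=
            Finset.prod_congr rfl fun i _ => by ring
        _ = (∏ _i : Fin (m+1), (-1:ℂ)) * ∏ i, (r - θ i) := Finset.prod_mul_distrib
        _ = (-1 : ℂ)^(m+1) * eval r (X ^ (m+1) + C (a : ℂ) * X + C (b : ℂ) : ℂ[X]) := by
            rw [Finset.prod_const, card_univ, Fintype.card_fin, h, eval_prod]
            simp
    rw [h1]
    simp only [eval_add, eval_mul, eval_pow, eval_X, eval_C]
    congr 1
    have h2 : r ^ (m + 1) = r * r ^ m := by ring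
    rw [h2, hroot r hr, hc]
    field_simp
    ring
  rw [Multiset.map_congr rfl hinner]
  have h3 : (Multiset.map (fun r => (-1:ℂ)^(m+1) * (c * r + b)) g.roots).prod
      = ((-1:ℂ)^(m+1))^m * (Multiset.map (fun r => c * r + b) g.roots).prod := by
    rw [Multiset.prod_map_mul (f := fun _ => (-1:ℂ)^(m+1)) (g := fun r => c * r + b)]
    congr 1
    rw [Multiset.map_const', Multiset.prod_replicate, hgsplits]
  rw [h3, ← pow_mul, mul_comm (m+1) m, Even.neg_one_pow (Nat.even_mul_succ_self m), one_mul]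
  have hprodcb : (Multiset.map (fun r => c * r + b) g.roots).prod
      = (b:ℂ)^m + (-c)^m * ((a:ℂ)/N) := by
    by_cases hc0 : c = 0
    · rw [Multiset.map_congr rfl (fun r _ => show c * r + (b:ℂ) = (b:ℂ) by rw [hc0]; ring)]
      rw [Multiset.map_const', Multiset.prod_replicate, hgsplits, hc0]
      simp [zero_pow (by omega : m ≠ 0)]
    · have hstep : ∀ r, c * r + b = -c * ((-(b:ℂ)/c) - r) := fun r => by field_simp; ring
      rw [Multiset.map_congr rfl (fun r _ => hstep r),
        Multiset.prod_map_mul (f := fun _ => -c) (g := fun r => (-(b:ℂ)/c) - r),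
        Multiset.map_const', Multiset.prod_replicate, hgsplits, hevalg, mul_add, ← mul_pow,
        show (-c) * (-(b:ℂ)/c) = (b:ℂ) by field_simp]
  rw [hprodcb]
  have hcexp : (-c)^m = ((a:ℂ) * (1 - N))^m / N^m := by
    rw [← div_pow]
    congr 1
    rw [hc]; field_simp; ring
  rw [hcexp]
  have hNpow : N ^ (m+1) = N^m * N := by ring
  rw [hNpow]
  field_simp
  ring

theorem stmt0 (n : ℕ) (hn : 2 ≤ n) (a b : ℤ) (θ : Fin n → ℂ)
    (h : (X ^ n + C (a : ℂ) * X + C (b : ℂ) : ℂ[X]) = ∏ i, (X - C (θ i))) :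
    ∏ q ∈ Finset.univ.filter (fun q : Fin n × Fin n => q.1 < q.2), (θ q.1 - θ q.2) ^ 2 =
      (-1) ^ (n * (n - 1) / 2) *
        ((n : ℂ) ^ n * (b : ℂ) ^ (n - 1) + ((1 : ℂ) - n) ^ (n - 1) * (a : ℂ) ^ n) := by
  obtain ⟨m, rfl⟩ : ∃ m, n = m + 1 := ⟨n - 1, by omega⟩
  have hm : 1 ≤ m := by omega
  rw [sign_prod']
  have hD : ∀ i, ∏ j ∈ univ.erase i, (θ i - θ j)
      = eval (θ i) (derivative (X ^ (m+1) + C (a : ℂ) * X + C (b : ℂ) : ℂ[X])) := by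
    intro i
    rw [h, eval_deriv_prod']
  rw [Finset.prod_congr rfl fun i _ => hD i, prod_deriv' m hm a b θ h]
  simp only [Nat.add_sub_cancel]
  push_cast
  ring
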